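/- arXiv:math/0511245 — 5 statements merged into one kernel-verified Lean document; each statement's English description precedes it below -/
import Mathlib

section
/- Let T be an integer-valued polynomial of degree at most Δ, and let α be an integer. Write T(x) = T(-α) + (x+α)·Q(x) for a polynomial Q of degree at most Δ-1. Then D_Δ · Q is an integer-valued polynomial, where D_Δ = lcm(1,2,...,Δ). -/
open Polynomial Finset

/-- The product of `k` consecutive descending integers starting at `a`
is `k!` times an integer. -/
lemma prod_range_sub_eq_factorial_mul (a : ℤ) (k : ℕ) :
    ∃ z : ℤ, ∏ i ∈ Finset.range k, (a - i) = (k.factorial : ℤ) * z := by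
  refine ⟨Ring.choose a k, ?_⟩
  have h : ∏ i ∈ Finset.range k, (a - i) = (descPochhammer ℤ k).eval a := by
    induction k with
    | zero => simp
    | succ n ih =>
        rw [Finset.prod_range_succ, ih, descPochhammer_succ_right]
        simp
  rw [h, eval_eq_smeval, Ring.descPochhammer_eq_factorial_smul_choose]
  simp [nsmul_eq_mul]

lemma prod_range_sub_eq_factorial_mul_rat (a : ℤ) (k : ℕ) :
    ∃ z : ℤ, ∏ i ∈ Finset.range k, ((a : ℚ) - i) = (k.factorial : ℚ) * z := by
  obtain ⟨z, hz⟩ := prod_range_sub_eq_factorial_mul a k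
  refine ⟨z, ?_⟩
  have := congrArg (Int.cast : ℤ → ℚ) hz
  push_cast at this
  exact this

lemma prod_range_k_sub (k : ℕ) :
    ∏ t ∈ Finset.range k, ((k : ℚ) - t) = k.factorial := by
  induction k with
  | zero => simp
  | succ n ih =>
      rw [Finset.prod_range_succ']
      have h : ∀ t ∈ Finset.range n, ((n + 1 : ℕ) : ℚ) - ((t + 1 : ℕ) : ℚ)
          = (n : ℚ) - t := by intro t _; push_cast; ring
      rw [Finset.prod_congr rfl h, ih, Nat.factorial_succ]
      push_cast
      ring

lemma prod_range_add_one (k : ℕ) :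
    ∏ t ∈ Finset.range k, ((t : ℚ) + 1) = k.factorial := by
  induction k with
  | zero => simp
  | succ n ih =>
      rw [Finset.prod_range_succ, ih, Nat.factorial_succ]
      push_cast
      ring

/-- Integrality of Lagrange basis at integer points, for consecutive integer nodes. -/
lemma lagrange_ratio_int (Δ j : ℕ) (h1 : 1 ≤ j) (h2 : j ≤ Δ) (m : ℤ) :
    ∃ w : ℤ, ∏ i ∈ (Finset.Icc 1 Δ).erase j, (((m : ℚ) - i) / ((j : ℚ) - i)) = w := by
  have hsplit : (Finset.Icc 1 Δ).erase j = Finset.Icc 1 (j-1) ∪ Finset.Icc (j+1) Δ := by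
    ext i
    simp only [Finset.mem_erase, Finset.mem_Icc, Finset.mem_union]
    omega
  have hdisj : Disjoint (Finset.Icc 1 (j-1)) (Finset.Icc (j+1) Δ) := by
    rw [Finset.disjoint_left]
    intro i hi hi'
    simp only [Finset.mem_Icc] at hi hi'
    omega
  rw [hsplit, Finset.prod_union hdisj, Finset.prod_div_distrib, Finset.prod_div_distrib]
  -- rewrite the four products over Icc as products over range
  have hIcc1 : Finset.Icc 1 (j-1) = Finset.Ico 1 j := by
    rw [← Finset.Ico_add_one_right_eq_Icc]; congr 1; omega
  have hIcc2 : Finset.Icc (j+1) Δ = Finset.Ico (j+1) (Δ+1) := by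
    rw [← Finset.Ico_add_one_right_eq_Icc]
  obtain ⟨z1, hz1⟩ := prod_range_sub_eq_factorial_mul_rat (m - 1) (j - 1)
  obtain ⟨z2, hz2⟩ := prod_range_sub_eq_factorial_mul_rat (m - j - 1) (Δ - j)
  have hA : ∏ i ∈ Finset.Icc 1 (j-1), ((m : ℚ) - i) = ((j-1).factorial : ℚ) * z1 := by
    rw [hIcc1, Finset.prod_Ico_eq_prod_range, ← hz1]
    have : j - 1 = j - 1 := rfl
    refine Finset.prod_congr rfl ?_
    intro t _
    push_cast
    ring
  have hB : ∏ i ∈ Finset.Icc 1 (j-1), ((j : ℚ) - i) = ((j-1).factorial : ℚ) := by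
    rw [hIcc1, Finset.prod_Ico_eq_prod_range, ← prod_range_k_sub (j-1)]
    refine Finset.prod_congr rfl ?_
    intro t ht
    have hj : ((j - 1 : ℕ) : ℚ) = (j : ℚ) - 1 := by
      rw [Nat.cast_sub h1]; norm_num
    rw [hj]
    push_cast
    ring
  have hC : ∏ i ∈ Finset.Icc (j+1) Δ, ((m : ℚ) - i)
      = ((Δ-j).factorial : ℚ) * z2 := by
    rw [hIcc2, Finset.prod_Ico_eq_prod_range, ← hz2]
    have hn : Δ + 1 - (j + 1) = Δ - j := by omega
    rw [hn]
    refine Finset.prod_congr rfl ?_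
    intro t _
    push_cast
    ring
  have hD : ∏ i ∈ Finset.Icc (j+1) Δ, ((j : ℚ) - i)
      = (-1)^(Δ-j) * ((Δ-j).factorial : ℚ) := by
    rw [hIcc2, Finset.prod_Ico_eq_prod_range]
    have hn : Δ + 1 - (j + 1) = Δ - j := by omega
    rw [hn]
    have : ∀ t ∈ Finset.range (Δ-j), ((j : ℚ) - ((j + 1 + t : ℕ) : ℚ))
        = (-1) * ((t : ℚ) + 1) := by
      intro t _
      push_cast
      ring
    rw [Finset.prod_congr rfl this, Finset.prod_mul_distrib, Finset.prod_const,
      prod_range_add_one, Finset.card_range]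
  rw [hA, hB, hC, hD]
  refine ⟨z1 * z2 * (-1)^(Δ-j), ?_⟩
  have hf1 : (((j-1).factorial : ℚ)) ≠ 0 := by
    exact_mod_cast Nat.factorial_ne_zero _
  have hf2 : (((Δ-j).factorial : ℚ)) ≠ 0 := by
    exact_mod_cast Nat.factorial_ne_zero _
  have hneg : ((-1 : ℚ))^(Δ-j) ≠ 0 := by
    apply pow_ne_zero; norm_num
  have hsq : ((-1:ℚ))^(Δ-j) * (-1)^(Δ-j) = 1 := by
    rw [← pow_add, ← two_mul, pow_mul, neg_one_sq, one_pow]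
  push_cast
  field_simp
  linear_combination (-((z1:ℚ) * z2)) * hsq

/-- `D_Δ = lcm(1,2,...,Δ)`. -/
def Dlcm (Δ : ℕ) : ℕ := (Finset.Icc 1 Δ).lcm id

/-- If `T` is integer-valued of degree at most `Δ ≥ 1`, `α ∈ ℤ`, and
`T(x) = T(-α) + (x+α)·Q(x)`, then `D_Δ · Q` is integer-valued. -/
theorem Dlcm_mul_quotient_integer_valued
    (Δ : ℕ) (hΔ : 1 ≤ Δ) (T Q : Polynomial ℚ) (α : ℤ)
    (hT : ∀ n : ℤ, ∃ z : ℤ, T.eval (n : ℚ) = z)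
    (hdeg : T.natDegree ≤ Δ)
    (hQ : T = Polynomial.C (T.eval ((-α : ℤ) : ℚ)) +
      (Polynomial.X + Polynomial.C ((α : ℚ))) * Q) :
    ∀ n : ℤ, ∃ z : ℤ, (Dlcm Δ : ℚ) * Q.eval (n : ℚ) = z := by
  intro n
  by_cases hQ0 : Q = 0
  · exact ⟨0, by simp [hQ0]⟩
  set s : Finset ℕ := Finset.Icc 1 Δ with hs
  set v : ℕ → ℚ := fun i => -(α : ℚ) + i with hv
  have hinj : Set.InjOn v s := by
    intro i _ k _ h
    have : (i : ℚ) = k := by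
      have := h
      simp only [hv] at this
      linarith
    exact_mod_cast this
  have hcard : s.card = Δ := by simp [hs]
  have hdQ : Q.degree < (s.card : WithBot ℕ) := by
    rw [hcard]
    have h1 : T - C (T.eval ((-α : ℤ) : ℚ)) = (X + C (α:ℚ)) * Q := by
      nth_rewrite 1 [hQ]; ring
    have hX : (X + C (α:ℚ)) ≠ 0 := (monic_X_add_C _).ne_zero
    have hmul : ((X + C (α:ℚ)) * Q).natDegree = 1 + Q.natDegree := by
      rw [Polynomial.natDegree_mul hX hQ0, natDegree_X_add_C]
    have hle : ((X + C (α:ℚ)) * Q).natDegree ≤ Δ := by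
      rw [← h1]
      exact le_trans (natDegree_sub_le _ _) (by simp [hdeg])
    rw [hmul] at hle
    exact (Polynomial.natDegree_lt_iff_degree_lt hQ0).mp (by omega)
  have hinterp := Lagrange.eq_interpolate hinj hdQ
  have heval : Q.eval (n:ℚ) = ∑ j ∈ s, Q.eval (v j) * (Lagrange.basis s v j).eval (n:ℚ) := by
    conv_lhs => rw [hinterp]
    rw [Lagrange.interpolate_apply, Polynomial.eval_finset_sum]
    exact Finset.sum_congr rfl fun j hj => by simp
  have key : ∀ j : ℕ, ∃ c : ℤ, j ∈ s →
      (Dlcm Δ : ℚ) * (Q.eval (v j) * (Lagrange.basis s v j).eval (n:ℚ)) = c := by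
    intro j
    by_cases hjs : j ∈ s
    swap
    · exact ⟨0, fun h => absurd h hjs⟩
    have hj' := hjs
    simp only [hs, Finset.mem_Icc] at hj'
    obtain ⟨hj1, hj2⟩ := hj'
    obtain ⟨w, hw⟩ := lagrange_ratio_int Δ j hj1 hj2 (n + α)
    have hbasis : (Lagrange.basis s v j).eval (n:ℚ) = w := by
      rw [← hw, Lagrange.basis, Polynomial.eval_prod]
      refine Finset.prod_congr rfl fun i hi => ?_
      have e1 : v j - v i = (j:ℚ) - i := by simp only [hv]; ring
      have e2 : ((n:ℚ) - v i) = ((n + α : ℤ):ℚ) - i := by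
        simp only [hv]; push_cast; ring
      rw [div_eq_inv_mul, ← e1, ← e2]
      simp [Lagrange.basisDivisor]
    obtain ⟨a, ha⟩ := hT (-α + j)
    obtain ⟨b, hb⟩ := hT (-α)
    have hvj : v j = ((-α + j : ℤ) : ℚ) := by simp only [hv]; push_cast; ring
    have hev := congrArg (Polynomial.eval (v j)) hQ
    simp only [eval_add, eval_mul, eval_C, eval_X] at hev
    have hjQ : (j : ℚ) * Q.eval (v j) = ((a - b : ℤ) : ℚ) := by
      have h1 : T.eval (v j) = a := by rw [hvj]; exact ha
      have h3 : v j + α = (j:ℚ) := by simp only [hv]; push_cast; ring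
      rw [h1, hb, h3] at hev
      push_cast
      linarith
    obtain ⟨e, he⟩ : j ∣ Dlcm Δ := Finset.dvd_lcm hjs
    refine ⟨e * (a - b) * w, fun _ => ?_⟩
    rw [hbasis]
    have hD : (Dlcm Δ : ℚ) = (j:ℚ) * e := by exact_mod_cast congrArg (Nat.cast (R := ℚ)) he
    rw [hD]
    push_cast
    push_cast at hjQ
    linear_combination ((e:ℚ) * w) * hjQ
  choose c hc using key
  refine ⟨∑ j ∈ s, c j, ?_⟩
  rw [heval, Finset.mul_sum]
  push_cast
  exact Finset.sum_congr rfl fun j hj => hc j hj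
end

section
/- Let Δ ≥ 0 be an integer and D_Δ = lcm(1,...,Δ). If R(x) = A/(x+α)^m with α ∈ ℤ, m ≥ 1, M ≥ m, and D_Δ^{M-m}·A ∈ ℤ, and T is an integer-valued polynomial of degree at most Δ, then R(x)·T(x) can be written as Σ_{k=1}^{m} B_k/(x+α)^k + S(x) where D_Δ^{M-k}·B_k ∈ ℤ for each k and D_Δ^{M}·S is an integer-valued polynomial. -/
open Polynomial

noncomputable def bin (n : ℕ) : ℚ[X] := C ((n.factorial : ℚ)⁻¹) * descPochhammer ℚ n

lemma bin_intval (n : ℕ) (t : ℤ) : ∃ z : ℤ, (bin n).eval (t : ℚ) = z := by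
  refine ⟨Ring.choose t n, ?_⟩
  have h : (descPochhammer ℤ n).eval t = n.factorial • Ring.choose t n := by
    rw [Polynomial.eval_eq_smeval]
    exact Ring.descPochhammer_eq_factorial_smul_choose t n
  have hc : ((((descPochhammer ℤ n).eval t : ℤ)) : ℚ) = (descPochhammer ℚ n).eval (t : ℚ) :=
    descPochhammer_eval_cast ℚ n t
  have hfac : (n.factorial : ℚ) ≠ 0 := Nat.cast_ne_zero.mpr n.factorial_ne_zero
  rw [bin, eval_mul, eval_C, ← hc, h]
  field_simp
  simp [nsmul_eq_mul]

lemma bin_zero : bin 0 = 1 := by simp [bin]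

lemma bin_succ (k : ℕ) :
    bin (k + 1) = X * (C (((k : ℚ) + 1)⁻¹) * (bin k).comp (X - 1)) := by
  have hfac : ((k + 1).factorial : ℚ)⁻¹ = ((k : ℚ) + 1)⁻¹ * ((k.factorial : ℚ))⁻¹ := by
    rw [Nat.factorial_succ]; push_cast; rw [mul_inv]
  unfold bin
  rw [descPochhammer_succ_left, mul_comp, C_comp, hfac, C_mul]
  ring

lemma bin_succ_eval_zero (k : ℕ) : (bin (k + 1)).eval 0 = 0 := by
  have : (descPochhammer ℚ (k + 1)).eval 0 = 0 :=
    descPochhammer_ne_zero_eval_zero ℚ (Nat.succ_ne_zero k)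
  rw [bin, eval_mul, this, mul_zero]

lemma bin_pascal (n : ℕ) : (bin (n + 1)).comp (X + 1) - bin (n + 1) = bin n := by
  have hl : (descPochhammer ℚ (n + 1)).comp (X + 1) = (X + 1) * descPochhammer ℚ n := by
    rw [descPochhammer_succ_left, mul_comp, X_comp, comp_assoc]
    have h2 : (X - 1 : ℚ[X]).comp (X + 1) = X := by simp [sub_comp]
    rw [h2, comp_X]
  have hfac : ((n + 1).factorial : ℚ)⁻¹ * ((n : ℚ) + 1) = ((n.factorial : ℚ))⁻¹ := by
    rw [Nat.factorial_succ]; push_cast; rw [mul_inv]; field_simp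
  have key : (descPochhammer ℚ (n + 1)).comp (X + 1) - descPochhammer ℚ (n + 1)
      = C ((n : ℚ) + 1) * descPochhammer ℚ n := by
    rw [hl, descPochhammer_succ_right]
    simp only [map_add, map_one, map_natCast]
    ring
  unfold bin
  rw [mul_comp, C_comp, ← mul_sub, key, ← mul_assoc, ← C_mul, hfac]

lemma eq_zero_of_comp_eq (P : ℚ[X]) (hc : P.comp (X + 1) = P) (h0 : P.eval 0 = 0) :
    P = 0 := by
  have hval : ∀ n : ℕ, P.eval (n : ℚ) = 0 := by
    intro n
    induction n with
    | zero => simpa using h0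
    | succ k ih =>
      have := congrArg (Polynomial.eval (k : ℚ)) hc
      rw [eval_comp, eval_add, eval_X, eval_one] at this
      push_cast
      rw [this, ih]
  apply Polynomial.eq_zero_of_infinite_isRoot
  apply Set.infinite_of_injective_forall_mem (f := fun n : ℕ => (n : ℚ))
  · exact fun a b hab => Nat.cast_injective hab
  · intro n
    exact hval n

lemma natDegree_fin_diff (R : ℚ[X]) (d : ℕ) (h : R.natDegree ≤ d + 1) :
    (R.comp (X + 1) - R).natDegree ≤ d := by
  by_cases h0 : R.natDegree = 0
  · obtain ⟨c, rfl⟩ := Polynomial.natDegree_eq_zero.mp h0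
    simp
  · have hR : R ≠ 0 := fun hh => h0 (by simp [hh])
    have hXdeg : (X + 1 : ℚ[X]).natDegree = 1 := by
      simpa using Polynomial.natDegree_X_add_C (1 : ℚ)
    have hcompdeg : (R.comp (X + 1)).natDegree = R.natDegree := by
      rw [Polynomial.natDegree_comp, hXdeg, mul_one]
    have hlc : (R.comp (X + 1)).leadingCoeff = R.leadingCoeff := by
      rw [Polynomial.leadingCoeff_comp (by rw [hXdeg]; norm_num)]
      have : (X + 1 : ℚ[X]).leadingCoeff = 1 := by
        simpa using Polynomial.leadingCoeff_X_add_C (r := (1 : ℚ))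
      rw [this, one_pow, mul_one]
    have hcomp0 : R.comp (X + 1) ≠ 0 := by
      have h1 : (R.comp (X + 1)).leadingCoeff ≠ 0 :=
        hlc ▸ Polynomial.leadingCoeff_ne_zero.mpr hR
      exact Polynomial.leadingCoeff_ne_zero.mp h1
    have hdegeq : (R.comp (X + 1)).degree = R.degree := by
      rw [Polynomial.degree_eq_natDegree hcomp0, Polynomial.degree_eq_natDegree hR, hcompdeg]
    have hlt : (R.comp (X + 1) - R).degree < R.degree :=
      hdegeq ▸ Polynomial.degree_sub_lt hdegeq hcomp0 hlc
    by_cases hz : R.comp (X + 1) - R = 0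
    · simp [hz]
    · have := Polynomial.natDegree_lt_natDegree hz (hdegeq ▸ hlt)
      omega

lemma sum_comp' {ι : Type*} (s : Finset ι) (f : ι → ℚ[X]) (q : ℚ[X]) :
    (∑ i ∈ s, f i).comp q = ∑ i ∈ s, (f i).comp q := by
  simp [Polynomial.comp, Polynomial.eval₂_finset_sum]

lemma expand : ∀ (d : ℕ) (R : ℚ[X]), R.natDegree ≤ d →
    (∀ t : ℤ, ∃ z : ℤ, R.eval (t : ℚ) = z) →
    ∃ a : ℕ → ℤ, R = ∑ n ∈ Finset.range (d + 1), (a n : ℚ) • bin n := by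
  intro d
  induction d with
  | zero =>
    intro R hdeg hval
    obtain ⟨z, hz⟩ := hval 0
    refine ⟨fun _ => z, ?_⟩
    have hR : R = C (R.coeff 0) := Polynomial.eq_C_of_natDegree_le_zero hdeg
    norm_num at hz
    rw [Finset.sum_range_one, bin_zero, Polynomial.smul_eq_C_mul, mul_one, hR,
      Polynomial.coeff_zero_eq_eval_zero, hz]
  | succ d ih =>
    intro R hdeg hval
    have hd1 : (R.comp (X + 1) - R).natDegree ≤ d := natDegree_fin_diff R d hdeg
    have hv1 : ∀ t : ℤ, ∃ z : ℤ, (R.comp (X + 1) - R).eval (t : ℚ) = z := by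
      intro t
      obtain ⟨z1, h1⟩ := hval (t + 1)
      obtain ⟨z2, h2⟩ := hval t
      refine ⟨z1 - z2, ?_⟩
      rw [eval_sub, eval_comp, eval_add, eval_X, eval_one]
      push_cast at h1 ⊢
      rw [h1, h2]
    obtain ⟨a, ha⟩ := ih (R.comp (X + 1) - R) hd1 hv1
    obtain ⟨z0, hz0⟩ := hval 0
    norm_num at hz0
    refine ⟨fun n => if n = 0 then z0 else a (n - 1), ?_⟩
    set Sp := ∑ n ∈ Finset.range (d + 2),
        (((if n = 0 then z0 else a (n - 1) : ℤ)) : ℚ) • bin n with hSp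
    have hdiff : Sp.comp (X + 1) - Sp = R.comp (X + 1) - R := by
      rw [hSp, sum_comp', ← Finset.sum_sub_distrib]
      have : ∀ n ∈ Finset.range (d + 2),
          ((((if n = 0 then z0 else a (n - 1) : ℤ)) : ℚ) • bin n).comp (X + 1) -
            (((if n = 0 then z0 else a (n - 1) : ℤ)) : ℚ) • bin n
          = (((if n = 0 then z0 else a (n - 1) : ℤ)) : ℚ) •
              ((bin n).comp (X + 1) - bin n) := by
        intro n _
        rw [Polynomial.smul_comp, smul_sub]
      rw [Finset.sum_congr rfl this, Finset.sum_range_succ']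
      simp only [Nat.succ_ne_zero, if_false, Nat.add_sub_cancel, if_pos rfl]
      rw [bin_zero]
      simp only [one_comp, sub_self, smul_zero, add_zero]
      rw [ha]
      apply Finset.sum_congr rfl
      intro n _
      rw [bin_pascal]
    have h0 : Sp.eval 0 = R.eval 0 := by
      rw [hSp, eval_finset_sum, Finset.sum_range_succ']
      simp only [Nat.succ_ne_zero, if_false, if_pos rfl]
      have : ∀ i ∈ Finset.range (d + 1),
          ((((a (i + 1 - 1) : ℤ)) : ℚ) • bin (i + 1)).eval 0 = 0 := by
        intro i _
        rw [Polynomial.eval_smul, bin_succ_eval_zero, smul_zero]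
      rw [Finset.sum_congr rfl this]
      simp [bin_zero, hz0]
    have hE : R - Sp = 0 := by
      apply eq_zero_of_comp_eq
      · rw [Polynomial.sub_comp, sub_eq_sub_iff_sub_eq_sub.mp hdiff.symm]
      · rw [eval_sub, h0, sub_self]
    have : R = Sp := by linear_combination (norm := ring_nf) hE
    rw [this]

lemma dvd_Dlcm {n Δ : ℕ} (h1 : 1 ≤ n) (h2 : n ≤ Δ) : n ∣ Dlcm Δ :=
  Finset.dvd_lcm (Finset.mem_Icc.mpr ⟨h1, h2⟩)

lemma divX_X_mul (W : ℚ[X]) : (X * W).divX = W := by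
  ext n
  rw [Polynomial.coeff_divX, Polynomial.coeff_X_mul]

lemma int_sum {ι : Type*} (s : Finset ι) (f : ι → ℚ)
    (h : ∀ i ∈ s, ∃ z : ℤ, f i = z) : ∃ z : ℤ, ∑ i ∈ s, f i = z := by
  classical
  induction s using Finset.induction_on with
  | empty => exact ⟨0, by simp⟩
  | @insert i s' hni ih =>
    obtain ⟨z1, hz1⟩ := h i (Finset.mem_insert_self i s')
    obtain ⟨z2, hz2⟩ := ih fun j hj => h j (Finset.mem_insert_of_mem hj)
    exact ⟨z1 + z2, by rw [Finset.sum_insert hni, hz1, hz2]; push_cast; ring⟩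

lemma core (Δ : ℕ) (R : ℚ[X]) (hdeg : R.natDegree ≤ Δ)
    (hval : ∀ t : ℤ, ∃ z : ℤ, R.eval (t : ℚ) = z) (t : ℤ) :
    ∃ z : ℤ, (Dlcm Δ : ℚ) * R.divX.eval (t : ℚ) = z := by
  obtain ⟨a, ha⟩ := expand Δ R hdeg hval
  have hdivX : R.divX = ∑ n ∈ Finset.range (Δ + 1), (a n : ℚ) • (bin n).divX := by
    rw [ha]
    ext k
    rw [Polynomial.coeff_divX, Polynomial.finset_sum_coeff, Polynomial.finset_sum_coeff]
    apply Finset.sum_congr rfl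
    intro n _
    rw [Polynomial.coeff_smul, Polynomial.coeff_smul, Polynomial.coeff_divX]
  rw [hdivX, eval_finset_sum, Finset.mul_sum]
  apply int_sum
  intro n hn
  match n with
  | 0 => exact ⟨0, by simp [bin_zero, Polynomial.divX_one]⟩
  | (k + 1) =>
    have hk : k + 1 ≤ Δ := by have := Finset.mem_range.mp hn; omega
    obtain ⟨e, he⟩ := dvd_Dlcm (Nat.succ_le_succ (Nat.zero_le k)) hk
    obtain ⟨w, hw⟩ := bin_intval k (t - 1)
    refine ⟨a (k + 1) * e * w, ?_⟩
    have hdx : (bin (k + 1)).divX = C (((k : ℚ) + 1)⁻¹) * (bin k).comp (X - 1) := by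
      rw [bin_succ, divX_X_mul]
    rw [Polynomial.eval_smul, hdx, eval_mul, eval_C, eval_comp, eval_sub, eval_X, eval_one]
    have ht : ((t : ℚ) - 1) = ((t - 1 : ℤ) : ℚ) := by push_cast; ring
    rw [ht, hw, he]
    have hne : ((k : ℚ) + 1) ≠ 0 := by positivity
    push_cast
    field_simp
    have hne' : (1 + (k : ℚ)) ≠ 0 := by positivity
    linear_combination ((e : ℚ) * (w : ℚ) * ((a (k + 1) : ℤ) : ℚ)) * mul_inv_cancel₀ hne'

lemma natDegree_iterate_divX_le (m : ℕ) (P : ℚ[X]) :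
    (Polynomial.divX^[m] P).natDegree ≤ P.natDegree := by
  induction m with
  | zero => simp
  | succ m ih =>
    rw [Function.iterate_succ_apply']
    exact le_trans Polynomial.natDegree_divX_le ih

lemma coeff_iterate_divX (m : ℕ) (P : ℚ[X]) : ∀ j : ℕ,
    (Polynomial.divX^[m] P).coeff j = P.coeff (m + j) := by
  induction m with
  | zero => simp
  | succ m ih =>
    intro j
    rw [Function.iterate_succ_apply', Polynomial.coeff_divX, ih (j + 1)]
    congr 1
    omega

lemma main_int (Δ : ℕ) (P : ℚ[X]) (hdeg : P.natDegree ≤ Δ)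
    (hval : ∀ t : ℤ, ∃ z : ℤ, P.eval (t : ℚ) = z) :
    ∀ (m : ℕ) (t : ℤ), ∃ z : ℤ,
      (Dlcm Δ : ℚ) ^ m * (Polynomial.divX^[m] P).eval (t : ℚ) = z := by
  intro m
  induction m with
  | zero => intro t; simpa using hval t
  | succ m ih =>
    intro t
    have hRdeg : (C ((Dlcm Δ : ℚ) ^ m) * Polynomial.divX^[m] P).natDegree ≤ Δ :=
      le_trans (Polynomial.natDegree_C_mul_le _ _)
        (le_trans (natDegree_iterate_divX_le m P) hdeg)
    have hRval : ∀ s : ℤ, ∃ z : ℤ,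
        (C ((Dlcm Δ : ℚ) ^ m) * Polynomial.divX^[m] P).eval (s : ℚ) = z := by
      intro s
      obtain ⟨z, hz⟩ := ih s
      exact ⟨z, by rw [eval_mul, eval_C]; exact hz⟩
    obtain ⟨z, hz⟩ := core Δ _ hRdeg hRval t
    refine ⟨z, ?_⟩
    rw [Polynomial.divX_C_mul, eval_mul, eval_C] at hz
    rw [Function.iterate_succ_apply', pow_succ]
    rw [← hz]
    ring

lemma eval_decomp (P : ℚ[X]) (m : ℕ) (y : ℚ) :
    P.eval y = (∑ j ∈ Finset.range m, P.coeff j * y ^ j)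
      + y ^ m * (Polynomial.divX^[m] P).eval y := by
  induction m with
  | zero => simp
  | succ m ih =>
    rw [ih, Finset.sum_range_succ]
    have hQ := Polynomial.divX_mul_X_add (Polynomial.divX^[m] P)
    have h2 := congrArg (Polynomial.eval y) hQ
    rw [eval_add, eval_mul, eval_X, eval_C] at h2
    rw [← h2, coeff_iterate_divX m P 0, Function.iterate_succ_apply']
    rw [Nat.add_zero]
    ring

/-- Multiplying `A/(x+α)^m` (with `D_Δ^{M-m} A ∈ ℤ`) by an integer-valued polynomial
of degree `≤ Δ` yields `Σ_{k=1}^m B_k/(x+α)^k + S(x)` with `D_Δ^{M-k} B_k ∈ ℤ`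
and `D_Δ^M S` integer-valued. -/
theorem single_pole_normal_mul
    (Δ : ℕ) (A : ℚ) (α : ℤ) (m M : ℕ) (hm : 1 ≤ m) (hmM : m ≤ M)
    (hA : ∃ z : ℤ, ((Dlcm Δ : ℚ) ^ (M - m)) * A = z)
    (T : Polynomial ℚ) (hT : ∀ n : ℤ, ∃ z : ℤ, T.eval (n : ℚ) = z)
    (hdeg : T.natDegree ≤ Δ) :
    ∃ (B : ℕ → ℚ) (S : Polynomial ℚ),
      (∀ x : ℚ, x + (α : ℚ) ≠ 0 →
        A / (x + (α : ℚ)) ^ m * T.eval x =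
          (∑ k ∈ Finset.Icc 1 m, B k / (x + (α : ℚ)) ^ k) + S.eval x) ∧
      (∀ k ∈ Finset.Icc 1 m, ∃ z : ℤ, ((Dlcm Δ : ℚ) ^ (M - k)) * B k = z) ∧
      (∀ n : ℤ, ∃ z : ℤ, ((Dlcm Δ : ℚ) ^ M) * S.eval (n : ℚ) = z) := by
  set P : ℚ[X] := T.comp (X - C (α : ℚ)) with hP
  have hPdeg : P.natDegree ≤ Δ := by
    rw [hP, Polynomial.natDegree_comp, Polynomial.natDegree_X_sub_C, mul_one]
    exact hdeg
  have hPval : ∀ t : ℤ, ∃ z : ℤ, P.eval (t : ℚ) = z := by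
    intro t
    obtain ⟨z, hz⟩ := hT (t - α)
    refine ⟨z, ?_⟩
    rw [hP, eval_comp, eval_sub, eval_X, eval_C]
    push_cast at hz ⊢
    exact hz
  have hTP : ∀ x : ℚ, T.eval x = P.eval (x + (α : ℚ)) := by
    intro x
    rw [hP, eval_comp, eval_sub, eval_X, eval_C, add_sub_cancel_right]
  obtain ⟨zA, hzA⟩ := hA
  refine ⟨fun k => A * P.coeff (m - k),
    C A * (Polynomial.divX^[m] P).comp (X + C (α : ℚ)), ?_, ?_, ?_⟩
  · intro x hx
    set u : ℚ := x + (α : ℚ) with hu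
    have hSx : (C A * (Polynomial.divX^[m] P).comp (X + C (α : ℚ))).eval x
        = A * (Polynomial.divX^[m] P).eval u := by
      rw [eval_mul, eval_C, eval_comp, eval_add, eval_X, eval_C]
    rw [hTP x, eval_decomp P m u, hSx]
    have step1 : (∑ k ∈ Finset.Icc 1 m, (A * P.coeff (m - k)) / u ^ k)
        = A / u ^ m * ∑ j ∈ Finset.range m, P.coeff j * u ^ j := by
      rw [Finset.mul_sum, ← Finset.Ico_add_one_right_eq_Icc, Finset.sum_Ico_eq_sum_range]
      rw [← Finset.sum_range_reflect (fun j => A / u ^ m * (P.coeff j * u ^ j)) m]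
      apply Finset.sum_congr rfl
      intro i hi
      have him : i < m := Finset.mem_range.mp hi
      have h1 : m - (1 + i) = m - 1 - i := by omega
      have h2 : u ^ m = u ^ (1 + i) * u ^ (m - 1 - i) := by
        rw [← pow_add]
        congr 1
        omega
      rw [h1, h2]
      have hne1 : u ^ (1 + i) ≠ 0 := pow_ne_zero _ hx
      have hne2 : u ^ (m - 1 - i) ≠ 0 := pow_ne_zero _ hx
      field_simp
    dsimp only
    rw [step1]
    have hne : u ^ m ≠ 0 := pow_ne_zero _ hx
    field_simp
  · intro k hk
    obtain ⟨hk1, hk2⟩ := Finset.mem_Icc.mp hk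
    obtain ⟨z2, hz2⟩ := main_int Δ P hPdeg hPval (m - k) 0
    refine ⟨zA * z2, ?_⟩
    have hc : P.coeff (m - k) = (Polynomial.divX^[m - k] P).eval (0 : ℚ) := by
      rw [← Polynomial.coeff_zero_eq_eval_zero, coeff_iterate_divX, Nat.add_zero]
    push_cast at hz2 ⊢
    rw [show M - k = (M - m) + (m - k) from by omega, pow_add, hc, ← hzA, ← hz2]
    ring
  · intro n
    obtain ⟨z2, hz2⟩ := main_int Δ P hPdeg hPval m (n + α)
    refine ⟨zA * z2, ?_⟩
    rw [eval_mul, eval_C, eval_comp, eval_add, eval_X, eval_C]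
    push_cast at hz2 ⊢
    rw [show M = (M - m) + m from by omega, pow_add, ← hzA, ← hz2]
    ring
end

section
/- A rational function R is called Δ-normal if R(x) = Σ_{α∈A} Σ_{m=1}^{M} A_{m,α}/(x+α)^m + P(x), where A is a finite set of nonnegative integers, D_Δ^{M-m} A_{m,α} ∈ ℤ for all m, α, and D_Δ^{M} P is an integer-valued polynomial. Theorem: the product of a Δ-normal rational function with an integer-valued polynomial of degree at most Δ is again Δ-normal (with the same maximal pole order M). -/
/-- A function `R : ℚ → ℚ` (a rational function, given off its poles) is `Δ`-normal
with maximal pole order `M` if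
`R(x) = Σ_{α∈A} Σ_{m=1}^{M} A_{m,α}/(x+α)^m + P(x)` where `A` is a finite set of
nonnegative integers, `D_Δ^{M-m} A_{m,α} ∈ ℤ`, and `D_Δ^M P` is integer-valued. -/
def IsDeltaNormal (Δ M : ℕ) (R : ℚ → ℚ) : Prop :=
  ∃ (𝒜 : Finset ℕ) (coef : ℕ → ℕ → ℚ) (P : Polynomial ℚ),
    (∀ m ∈ Finset.Icc 1 M, ∀ α ∈ 𝒜,
      ∃ z : ℤ, ((Dlcm Δ : ℚ) ^ (M - m)) * coef m α = z) ∧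
    (∀ n : ℤ, ∃ z : ℤ, ((Dlcm Δ : ℚ) ^ M) * P.eval (n : ℚ) = z) ∧
    (∀ x : ℚ, (∀ α ∈ 𝒜, x + (α : ℚ) ≠ 0) →
      R x = (∑ α ∈ 𝒜, ∑ m ∈ Finset.Icc 1 M, coef m α / (x + (α : ℚ)) ^ m) + P.eval x)

namespace Aux
open Polynomial Finset

def IZ (q : ℚ) : Prop := ∃ z : ℤ, q = z

lemma IZ_intCast (z : ℤ) : IZ (z : ℚ) := ⟨z, rfl⟩
lemma IZ_zero : IZ 0 := ⟨0, by norm_num⟩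
lemma IZ_one : IZ 1 := ⟨1, by norm_num⟩
lemma IZ_natCast (n : ℕ) : IZ (n : ℚ) := ⟨n, by push_cast; ring⟩
lemma IZ_add {a b : ℚ} (ha : IZ a) (hb : IZ b) : IZ (a + b) := by
  obtain ⟨x, rfl⟩ := ha; obtain ⟨y, rfl⟩ := hb; exact ⟨x + y, by push_cast; ring⟩
lemma IZ_mul {a b : ℚ} (ha : IZ a) (hb : IZ b) : IZ (a * b) := by
  obtain ⟨x, rfl⟩ := ha; obtain ⟨y, rfl⟩ := hb; exact ⟨x * y, by push_cast; ring⟩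
lemma IZ_sub {a b : ℚ} (ha : IZ a) (hb : IZ b) : IZ (a - b) := by
  obtain ⟨x, rfl⟩ := ha; obtain ⟨y, rfl⟩ := hb; exact ⟨x - y, by push_cast; ring⟩
lemma IZ_neg {a : ℚ} (ha : IZ a) : IZ (-a) := by
  obtain ⟨x, rfl⟩ := ha; exact ⟨-x, by push_cast; ring⟩
lemma IZ_pow {a : ℚ} (ha : IZ a) (n : ℕ) : IZ (a ^ n) := by
  obtain ⟨x, rfl⟩ := ha; exact ⟨x ^ n, by push_cast; ring⟩
lemma IZ_sum {ι : Type*} (s : Finset ι) (f : ι → ℚ) (h : ∀ i ∈ s, IZ (f i)) :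
    IZ (∑ i ∈ s, f i) := by
  classical
  induction s using Finset.induction with
  | empty => simpa using IZ_zero
  | insert _ _ hx ih =>
    rw [Finset.sum_insert hx]
    exact IZ_add (h _ (Finset.mem_insert_self _ _))
      (ih fun i hi => h i (Finset.mem_insert_of_mem hi))

lemma dvd_Dlcm {Δ k : ℕ} (h1 : 1 ≤ k) (h2 : k ≤ Δ) : k ∣ Dlcm Δ :=
  Finset.dvd_lcm (by simp [Finset.mem_Icc]; omega)

lemma Dlcm_ne_zero (Δ : ℕ) : Dlcm Δ ≠ 0 := by
  unfold Dlcm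
  rw [Ne, Finset.lcm_eq_zero_iff]
  simp [Finset.mem_Icc]

lemma Dlcm_cast_ne_zero (Δ : ℕ) : (Dlcm Δ : ℚ) ≠ 0 := by
  exact_mod_cast Dlcm_ne_zero Δ

end Aux
-- mark

namespace Aux
open Polynomial Finset

noncomputable def Bpoly (k : ℕ) : Polynomial ℚ :=
  C ((k.factorial : ℚ))⁻¹ * ∏ i ∈ Finset.range k, (X - C (i : ℚ))

lemma Bpoly_zero : Bpoly 0 = 1 := by simp [Bpoly]

lemma Bpoly_succ (k : ℕ) :
    Bpoly (k + 1) = Bpoly k * (X - C (k : ℚ)) * C (((k : ℚ) + 1))⁻¹ := by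
  simp only [Bpoly, Finset.prod_range_succ, Nat.factorial_succ]
  push_cast
  rw [mul_inv, map_mul]
  ring

lemma Bpoly_eval (k : ℕ) (x : ℚ) :
    (Bpoly k).eval x = ((k.factorial : ℚ))⁻¹ * ∏ i ∈ Finset.range k, (x - (i : ℚ)) := by
  simp [Bpoly, eval_prod]

lemma Bpoly_pascal (k : ℕ) :
    (Bpoly (k + 1)).comp (X + C 1) = Bpoly (k + 1) + Bpoly k := by
  apply Polynomial.funext
  intro x
  rw [eval_comp]
  simp only [eval_add, eval_X, eval_C, Bpoly_eval]
  have h1 : ∏ i ∈ Finset.range (k + 1), (x + 1 - (i : ℚ))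
      = (x + 1) * ∏ i ∈ Finset.range k, (x - (i : ℚ)) := by
    rw [Finset.prod_range_succ']
    rw [mul_comm]
    congr 1
    · norm_num
    · exact Finset.prod_congr rfl fun i _ => by push_cast; ring
  have h2 : ∏ i ∈ Finset.range (k + 1), (x - (i : ℚ))
      = (∏ i ∈ Finset.range k, (x - (i : ℚ))) * (x - (k : ℚ)) := Finset.prod_range_succ _ _
  rw [h1, h2, Nat.factorial_succ]
  have hf : ((k.factorial : ℚ)) ≠ 0 := by exact_mod_cast k.factorial_ne_zero
  have hk1 : ((k : ℚ) + 1) ≠ 0 := by positivity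
  push_cast
  field_simp
  ring

lemma Bpoly_eval_zero_succ (k : ℕ) : (Bpoly (k + 1)).eval 0 = 0 := by
  rw [Bpoly_eval]
  rw [Finset.prod_eq_zero (Finset.mem_range.2 (Nat.succ_pos k)) (by norm_num)]
  ring

lemma coeff_mul_X_sub_C_succ (p : Polynomial ℚ) (a : ℚ) (n : ℕ) :
    (p * (X - C a)).coeff (n + 1) = p.coeff n - a * p.coeff (n + 1) := by
  have hexp : p * (X - C a) = p * X - C a * p := by ring
  rw [hexp, coeff_sub, coeff_mul_X, coeff_C_mul]

lemma coeff_mul_X_sub_C_zero (p : Polynomial ℚ) (a : ℚ) :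
    (p * (X - C a)).coeff 0 = -(a * p.coeff 0) := by
  rw [mul_coeff_zero]
  simp [coeff_X_zero]
  ring

lemma Bpoly_induct (Δ : ℕ) : ∀ k, k ≤ Δ →
    ((Bpoly k).coeff 0 = if k = 0 then 1 else 0) ∧
    ∀ j, IZ ((k : ℚ) * (Dlcm Δ : ℚ) ^ j * (Bpoly k).coeff (j + 1)) := by
  intro k
  induction k with
  | zero =>
    intro _
    constructor
    · simp [Bpoly_zero]
    · intro j; simp
      exact IZ_zero
  | succ k ih =>
    intro hk
    obtain ⟨h0, h1⟩ := ih (le_trans (Nat.le_succ k) hk)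
    have hk1 : ((k : ℚ) + 1) ≠ 0 := by positivity
    constructor
    · rw [Bpoly_succ, coeff_mul_C, coeff_mul_X_sub_C_zero, h0]
      by_cases h : k = 0 <;> simp [h]
    · intro j
      rw [Bpoly_succ, coeff_mul_C, coeff_mul_X_sub_C_succ]
      have key : ((k : ℚ) + 1) * (Dlcm Δ : ℚ) ^ j *
          (((Bpoly k).coeff j - (k : ℚ) * (Bpoly k).coeff (j + 1)) * ((k : ℚ) + 1)⁻¹)
          = (Dlcm Δ : ℚ) ^ j * (Bpoly k).coeff j
            - (k : ℚ) * (Dlcm Δ : ℚ) ^ j * (Bpoly k).coeff (j + 1) := by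
        field_simp
      push_cast
      rw [key]
      refine IZ_sub ?_ (h1 j)
      -- IZ (D^j * (Bpoly k).coeff j)
      cases j with
      | zero =>
        simp only [pow_zero, one_mul, h0]
        by_cases h : k = 0 <;> simp [h, IZ_zero, IZ_one]
      | succ j' =>
        rcases Nat.eq_zero_or_pos k with hk0 | hkpos
        · subst hk0
          simp [Bpoly_zero, coeff_one]
          exact IZ_zero
        · obtain ⟨d, hd⟩ := dvd_Dlcm hkpos (le_trans (Nat.le_succ k) hk)
          have : (Dlcm Δ : ℚ) ^ (j' + 1) * (Bpoly k).coeff (j' + 1)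
              = (d : ℚ) * ((k : ℚ) * (Dlcm Δ : ℚ) ^ j' * (Bpoly k).coeff (j' + 1)) := by
            rw [pow_succ]
            have : (Dlcm Δ : ℚ) = (k : ℚ) * (d : ℚ) := by exact_mod_cast congrArg (Nat.cast : ℕ → ℚ) hd
            rw [this]
            ring
          rw [this]
          exact IZ_mul (IZ_intCast d) (h1 j')

lemma Bpoly_coeff_int (Δ k j : ℕ) (hk : k ≤ Δ) :
    IZ ((Dlcm Δ : ℚ) ^ j * (Bpoly k).coeff j) := by
  obtain ⟨h0, h1⟩ := Bpoly_induct Δ k hk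
  cases j with
  | zero =>
    simp only [pow_zero, one_mul, h0]
    by_cases h : k = 0 <;> simp [h, IZ_zero, IZ_one]
  | succ j' =>
    rcases Nat.eq_zero_or_pos k with hk0 | hkpos
    · subst hk0
      simp [Bpoly_zero, coeff_one]
      exact IZ_zero
    · obtain ⟨d, hd⟩ := dvd_Dlcm hkpos hk
      have key : (Dlcm Δ : ℚ) ^ (j' + 1) * (Bpoly k).coeff (j' + 1)
          = (d : ℚ) * ((k : ℚ) * (Dlcm Δ : ℚ) ^ j' * (Bpoly k).coeff (j' + 1)) := by
        rw [pow_succ]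
        have : (Dlcm Δ : ℚ) = (k : ℚ) * (d : ℚ) := by exact_mod_cast congrArg (Nat.cast : ℕ → ℚ) hd
        rw [this]
        ring
      rw [key]
      exact IZ_mul (IZ_intCast d) (h1 j')

end Aux

namespace Aux
open Polynomial Finset

lemma finset_sum_comp {ι : Type*} (s : Finset ι) (f : ι → Polynomial ℚ) (q : Polynomial ℚ) :
    (∑ i ∈ s, f i).comp q = ∑ i ∈ s, (f i).comp q :=
  map_sum (compRingHom q) f s

lemma comp_X_add_one_coeff_of_le (U : Polynomial ℚ) {N : ℕ} (h : U.natDegree ≤ N) :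
    (U.comp (X + C 1)).coeff N = U.coeff N := by
  conv_lhs => rw [U.as_sum_range' (N + 1) (Nat.lt_succ_of_le h)]
  rw [finset_sum_comp]
  have hC : (X + C 1 : Polynomial ℚ) = X + 1 := by rw [C_1]
  rw [finset_sum_coeff]
  have : ∀ i ∈ Finset.range (N + 1),
      (((monomial i) (U.coeff i)).comp (X + C 1)).coeff N
        = U.coeff i * (i.choose N : ℚ) := by
    intro i _
    rw [monomial_comp, hC, coeff_C_mul, coeff_X_add_one_pow]
  rw [Finset.sum_congr rfl this]
  rw [Finset.sum_eq_single N]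
  · simp
  · intro i hi hne
    rcases lt_or_gt_of_ne hne with hlt | hgt
    · simp [Nat.choose_eq_zero_of_lt hlt]
    · exact absurd (Finset.mem_range.1 hi) (by omega)
  · intro h'
    exact absurd (Finset.self_mem_range_succ N) h'

lemma natDegree_diff_le (U : Polynomial ℚ) {d : ℕ} (h : U.natDegree ≤ d + 1) :
    (U.comp (X + C 1) - U).natDegree ≤ d := by
  rw [Polynomial.natDegree_le_iff_coeff_eq_zero]
  intro N hN
  rw [coeff_sub]
  rcases eq_or_lt_of_le (Nat.succ_le_of_lt hN) with hNe | hNlt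
  · rw [comp_X_add_one_coeff_of_le U (hNe ▸ h), sub_self]
  · have h1 : (U.comp (X + C 1)).natDegree < N := by
      calc (U.comp (X + C 1)).natDegree ≤ U.natDegree * (X + C (1:ℚ)).natDegree :=
            natDegree_comp_le
        _ ≤ d + 1 := by rw [natDegree_X_add_C]; omega
        _ < N := hNlt
    rw [Polynomial.coeff_eq_zero_of_natDegree_lt h1,
      Polynomial.coeff_eq_zero_of_natDegree_lt (lt_of_le_of_lt h (by omega)), sub_self]

end Aux

namespace Aux
open Polynomial Finset

lemma mahler : ∀ (d : ℕ) (U : Polynomial ℚ), U.natDegree ≤ d → (∀ n : ℤ, IZ (U.eval (n : ℚ))) →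
    ∃ a : ℕ → ℤ, U = ∑ k ∈ Finset.range (d + 1), C ((a k : ℚ)) * Bpoly k := by
  intro d
  induction d with
  | zero =>
    intro U hdeg hint
    obtain ⟨z, hz⟩ := hint 0
    refine ⟨fun _ => z, ?_⟩
    rw [Polynomial.eq_C_of_natDegree_le_zero hdeg]
    have h0 : U.coeff 0 = (z : ℚ) := by
      rw [Polynomial.coeff_zero_eq_eval_zero]
      rw [Int.cast_zero] at hz
      exact hz
    rw [h0]
    simp [Bpoly_zero]
  | succ d ih =>
    intro U hdeg hint
    set V := U.comp (X + C 1) - U with hV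
    have hVdeg : V.natDegree ≤ d := natDegree_diff_le U hdeg
    have hVint : ∀ n : ℤ, IZ (V.eval (n : ℚ)) := by
      intro n
      have : V.eval (n : ℚ) = U.eval ((n + 1 : ℤ) : ℚ) - U.eval ((n : ℤ) : ℚ) := by
        rw [hV, eval_sub, eval_comp, eval_add, eval_X, eval_C]
        push_cast
        ring
      rw [this]
      exact IZ_sub (hint (n + 1)) (hint n)
    obtain ⟨b, hb⟩ := ih V hVdeg hVint
    set S := ∑ k ∈ Finset.range (d + 1), C ((b k : ℚ)) * Bpoly (k + 1) with hS
    set W := U - S with hWdef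
    have hScomp : S.comp (X + C 1) = S + ∑ k ∈ Finset.range (d + 1), C ((b k : ℚ)) * Bpoly k := by
      rw [hS, finset_sum_comp, ← Finset.sum_add_distrib]
      refine Finset.sum_congr rfl fun k _ => ?_
      rw [mul_comp, C_comp, Bpoly_pascal]
      ring
    have hUcomp : U.comp (X + C 1) = V + U := by rw [hV]; ring
    have hWcomp : W.comp (X + C 1) = W := by
      rw [hWdef, sub_comp, hScomp, hUcomp, hb]
      ring
    have hWnat : ∀ n : ℕ, W.eval (n : ℚ) = W.eval 0 := by
      intro n
      induction n with
      | zero => norm_num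
      | succ n ihn =>
        have := congrArg (Polynomial.eval (n : ℚ)) hWcomp
        rw [eval_comp, eval_add, eval_X, eval_C] at this
        rw [← ihn, ← this]
        norm_num
    have hWC : W = C (W.eval 0) := by
      apply Polynomial.eq_of_infinite_eval_eq
      apply Set.infinite_of_injective_forall_mem (f := ((↑) : ℕ → ℚ)) Nat.cast_injective
      intro n
      simp only [Set.mem_setOf_eq, eval_C]
      rw [hWnat n]
    have hWint : IZ (W.eval 0) := by
      have hW0 : W.eval 0 = U.eval 0 := by
        rw [hWdef, eval_sub, hS, eval_finset_sum]
        have : ∀ k ∈ Finset.range (d + 1), ((C ((b k : ℚ)) * Bpoly (k + 1)).eval 0) = 0 := by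
          intro k _
          rw [eval_mul, eval_C, Bpoly_eval_zero_succ, mul_zero]
        rw [Finset.sum_congr rfl this]
        simp
      rw [hW0]
      have := hint 0
      rwa [Int.cast_zero] at this
    obtain ⟨z, hz⟩ := hWint
    refine ⟨fun k => match k with | 0 => z | (k + 1) => b k, ?_⟩
    rw [Finset.sum_range_succ']
    have hU : U = W + S := by rw [hWdef]; ring
    rw [hU, hWC, hz]
    simp only [Bpoly_zero, mul_one]
    ring

lemma coeff_int (Δ : ℕ) (U : Polynomial ℚ) (hdeg : U.natDegree ≤ Δ)
    (hint : ∀ n : ℤ, IZ (U.eval (n : ℚ))) (j : ℕ) :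
    IZ ((Dlcm Δ : ℚ) ^ j * U.coeff j) := by
  obtain ⟨a, ha⟩ := mahler Δ U hdeg hint
  rw [ha, finset_sum_coeff, Finset.mul_sum]
  apply IZ_sum
  intro k hk
  rw [coeff_C_mul]
  have : (Dlcm Δ : ℚ) ^ j * ((a k : ℚ) * (Bpoly k).coeff j)
      = (a k : ℚ) * ((Dlcm Δ : ℚ) ^ j * (Bpoly k).coeff j) := by ring
  rw [this]
  exact IZ_mul (IZ_intCast _) (Bpoly_coeff_int Δ k j (by simp at hk; omega))

lemma IZ_of_locally (q : ℚ) (h : ∀ p : ℕ, p.Prime → ∃ a b : ℤ, ¬((p : ℤ) ∣ b) ∧ q * b = a) :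
    IZ q := by
  by_cases hden : q.den = 1
  · refine ⟨q.num, ?_⟩
    rw [← Rat.num_div_den q, hden]
    simp
  · exfalso
    set p := q.den.minFac with hp
    have hpp : p.Prime := Nat.minFac_prime hden
    obtain ⟨a, b, hb, hab⟩ := h p hpp
    have hdvdden : (p : ℤ) ∣ (q.den : ℤ) := Int.natCast_dvd_natCast.mpr q.den.minFac_dvd
    have hden0 : (q.den : ℚ) ≠ 0 := by
      exact_mod_cast q.den_nz
    have hint : (q.num : ℚ) * (b : ℚ) = (a : ℚ) * (q.den : ℚ) := by
      rw [← Rat.num_div_den q] at hab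
      field_simp at hab
      linear_combination hab
    have hZ : q.num * b = a * (q.den : ℤ) := by exact_mod_cast hint
    have hpd : (p : ℤ) ∣ q.num * b := hZ ▸ Dvd.dvd.mul_left hdvdden a
    have hprime : Prime (p : ℤ) := Nat.prime_iff_prime_int.mp hpp
    rcases hprime.dvd_mul.mp hpd with hnum | hbb
    · have h1 : p ∣ q.num.natAbs := by
        have h' : ((p : ℤ)).natAbs ∣ q.num.natAbs := Int.natAbs_dvd_natAbs.mpr hnum
        simpa using h'
      have h2 : p ∣ Nat.gcd q.num.natAbs q.den := Nat.dvd_gcd h1 q.den.minFac_dvd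
      rw [q.reduced] at h2
      have := Nat.le_of_dvd one_pos h2
      exact absurd this (by have := hpp.two_le; omega)
    · exact hb hbb

lemma remainder_int (Δ : ℕ) (U : Polynomial ℚ) (hdeg : U.natDegree ≤ Δ)
    (hint : ∀ n : ℤ, IZ (U.eval (n : ℚ))) (m : ℕ) (t : ℤ) :
    IZ ((Dlcm Δ : ℚ) ^ m * ∑ j ∈ Finset.Ico m (Δ + 1), U.coeff j * (t : ℚ) ^ (j - m)) := by
  by_cases hm : Δ + 1 ≤ m
  · rw [Finset.Ico_eq_empty (by omega), Finset.sum_empty, mul_zero]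
    exact IZ_zero
  push_neg at hm
  have hmΔ : m ≤ Δ := by omega
  by_cases ht : t = 0
  · subst ht
    rw [Finset.sum_eq_single m]
    · simpa using coeff_int Δ U hdeg hint m
    · intro j hj hne
      have : j - m ≠ 0 := by simp [Finset.mem_Ico] at hj; omega
      simp [zero_pow this]
    · intro h
      exact absurd (Finset.mem_Ico.2 ⟨le_refl m, by omega⟩) h
  -- main case
  apply IZ_of_locally
  intro p hpp
  have hppZ : Prime (p : ℤ) := Nat.prime_iff_prime_int.mp hpp
  have hD0Q : (Dlcm Δ : ℚ) ≠ 0 := Dlcm_cast_ne_zero Δ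
  obtain ⟨L, D0, hD0p, hDfact⟩ :=
    Nat.exists_eq_pow_mul_and_not_dvd (Dlcm_ne_zero Δ) p hpp.ne_one
  obtain ⟨s, t0n, ht0p, htfact⟩ :=
    Nat.exists_eq_pow_mul_and_not_dvd (Int.natAbs_ne_zero.mpr ht) p hpp.ne_one
  have hcast : (t.natAbs : ℤ) = (p : ℤ) ^ s * (t0n : ℤ) := by exact_mod_cast congrArg (Nat.cast : ℕ → ℤ) htfact
  have ht0nZ : ¬ ((p : ℤ) ∣ (t0n : ℤ)) := fun hd => ht0p (Int.natCast_dvd_natCast.mp hd)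
  obtain ⟨t0, ht0, htZ⟩ : ∃ t0 : ℤ, ¬((p : ℤ) ∣ t0) ∧ t = (p : ℤ) ^ s * t0 := by
    rcases Int.natAbs_eq t with h | h
    · exact ⟨(t0n : ℤ), ht0nZ, by rw [h, hcast]⟩
    · exact ⟨-(t0n : ℤ), by simpa using ht0nZ, by rw [h, hcast]; ring⟩
  have hz' : ∀ j, ∃ zz : ℤ, (Dlcm Δ : ℚ) ^ j * U.coeff j = zz := fun j => coeff_int Δ U hdeg hint j
  choose z hz using hz'
  have hDQ : (Dlcm Δ : ℚ) = (p : ℚ) ^ L * (D0 : ℚ) := by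
    exact_mod_cast congrArg (Nat.cast : ℕ → ℚ) hDfact
  have htQ : (t : ℚ) = (p : ℚ) ^ s * (t0 : ℚ) := by
    exact_mod_cast congrArg (Int.cast : ℤ → ℚ) htZ
  have hD0Zne : ¬ ((p : ℤ) ∣ (D0 : ℤ)) := fun hd => hD0p (Int.natCast_dvd_natCast.mp hd)
  have hpQ : (p : ℚ) ≠ 0 := by exact_mod_cast hpp.pos.ne'
  have hD0n0 : D0 ≠ 0 := by
    intro h
    exact Dlcm_ne_zero Δ (by rw [hDfact, h, mul_zero])
  have hD0Q0 : (D0 : ℚ) ≠ 0 := by exact_mod_cast hD0n0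
  rcases le_or_gt L s with hLs | hsL
  · -- case L ≤ s : termwise
    refine ⟨∑ j ∈ Finset.Ico m (Δ + 1),
        z j * t0 ^ (j - m) * (p : ℤ) ^ ((s - L) * (j - m)) * (D0 : ℤ) ^ (Δ - (j - m)),
      ((D0 : ℤ)) ^ Δ, fun hd => hD0Zne (hppZ.dvd_of_dvd_pow hd), ?_⟩
    push_cast
    rw [Finset.mul_sum, Finset.sum_mul]
    refine Finset.sum_congr rfl fun j hj => ?_
    rw [Finset.mem_Ico] at hj
    obtain ⟨e, rfl⟩ : ∃ e, j = m + e := ⟨j - m, by omega⟩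
    have h1 : m + e - m = e := by omega
    obtain ⟨ed, hed⟩ : ∃ ed, Δ = e + ed := ⟨Δ - e, by omega⟩
    obtain ⟨es, hes⟩ : ∃ es, s = L + es := ⟨s - L, by omega⟩
    have h2 : s - L = es := by omega
    rw [h1, h2, show Δ - e = ed from by omega]
    have hu : U.coeff (m + e) = (z (m + e) : ℚ) / (Dlcm Δ : ℚ) ^ (m + e) := by
      rw [eq_div_iff (pow_ne_zero _ hD0Q)]
      linear_combination hz (m + e)
    have hD0Δ : (D0 : ℚ) ^ Δ = (D0 : ℚ) ^ e * (D0 : ℚ) ^ ed := by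
      rw [hed, pow_add]
    have hps : (p : ℚ) ^ s = (p : ℚ) ^ L * (p : ℚ) ^ es := by
      rw [hes, pow_add]
    rw [hu, htQ, hps, hD0Δ, hDQ]
    field_simp
    ring
  · -- case s < L
    obtain ⟨n1, hn1⟩ := hint t
    set NZ : ℤ := (Dlcm Δ : ℤ) ^ m * n1
        - ∑ j ∈ Finset.range m, (Dlcm Δ : ℤ) ^ (m - j) * z j * t ^ j with hNZ
    have stepA : (t : ℚ) ^ m *
        ((Dlcm Δ : ℚ) ^ m * ∑ j ∈ Finset.Ico m (Δ + 1), U.coeff j * (t : ℚ) ^ (j - m))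
        = (NZ : ℚ) := by
      have e0 : ∀ j ∈ Finset.Ico m (Δ + 1), U.coeff j * (t : ℚ) ^ (j - m) * (t : ℚ) ^ m
          = U.coeff j * (t : ℚ) ^ j := by
        intro j hj
        rw [Finset.mem_Ico] at hj
        rw [mul_assoc, ← pow_add, Nat.sub_add_cancel hj.1]
      have e1 : (t : ℚ) ^ m *
          ((Dlcm Δ : ℚ) ^ m * ∑ j ∈ Finset.Ico m (Δ + 1), U.coeff j * (t : ℚ) ^ (j - m))
          = (Dlcm Δ : ℚ) ^ m * ∑ j ∈ Finset.Ico m (Δ + 1), U.coeff j * (t : ℚ) ^ j := by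
        rw [show (t : ℚ) ^ m *
            ((Dlcm Δ : ℚ) ^ m * ∑ j ∈ Finset.Ico m (Δ + 1), U.coeff j * (t : ℚ) ^ (j - m))
            = (Dlcm Δ : ℚ) ^ m *
              ((∑ j ∈ Finset.Ico m (Δ + 1), U.coeff j * (t : ℚ) ^ (j - m)) * (t : ℚ) ^ m)
          from by ring, Finset.sum_mul, Finset.sum_congr rfl e0]
      have e2 : ∑ j ∈ Finset.Ico m (Δ + 1), U.coeff j * (t : ℚ) ^ j
          = (∑ j ∈ Finset.range (Δ + 1), U.coeff j * (t : ℚ) ^ j)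
            - ∑ j ∈ Finset.range m, U.coeff j * (t : ℚ) ^ j :=
        Finset.sum_Ico_eq_sub _ (by omega)
      have e3 : ∑ j ∈ Finset.range (Δ + 1), U.coeff j * (t : ℚ) ^ j = U.eval (t : ℚ) :=
        (Polynomial.eval_eq_sum_range' (by omega) _).symm
      have sum_eq : ∀ j ∈ Finset.range m, (Dlcm Δ : ℚ) ^ m * (U.coeff j * (t : ℚ) ^ j)
          = (Dlcm Δ : ℚ) ^ (m - j) * (z j : ℚ) * (t : ℚ) ^ j := by
        intro j hj
        rw [Finset.mem_range] at hj
        have h1 : (Dlcm Δ : ℚ) ^ m = (Dlcm Δ : ℚ) ^ (m - j) * (Dlcm Δ : ℚ) ^ j := by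
          rw [← pow_add]; congr 1; omega
        rw [h1, show (Dlcm Δ : ℚ) ^ (m - j) * (Dlcm Δ : ℚ) ^ j * (U.coeff j * (t : ℚ) ^ j)
            = (Dlcm Δ : ℚ) ^ (m - j) * ((Dlcm Δ : ℚ) ^ j * U.coeff j) * (t : ℚ) ^ j
          from by ring, hz j]
      rw [e1, e2, e3, mul_sub, hn1, hNZ, Finset.mul_sum, Finset.sum_congr rfl sum_eq]
      push_cast
      ring
    have stepB : ((p : ℤ)) ^ (s * m) ∣ NZ := by
      rw [hNZ]
      apply dvd_sub
      · have : (Dlcm Δ : ℤ) ^ m * n1 = (p : ℤ) ^ (L * m) * ((D0 : ℤ) ^ m * n1) := by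
          rw [hDfact]
          push_cast
          rw [mul_pow, ← pow_mul]
          ring
        rw [this]
        exact Dvd.dvd.mul_right (pow_dvd_pow (p:ℤ) (Nat.mul_le_mul hsL.le (Nat.le_refl m))) _
      · apply Finset.dvd_sum
        intro j hj
        rw [Finset.mem_range] at hj
        have hterm : (Dlcm Δ : ℤ) ^ (m - j) * z j * t ^ j
            = (p : ℤ) ^ (L * (m - j) + s * j) * ((D0 : ℤ) ^ (m - j) * z j * t0 ^ j) := by
          rw [hDfact, htZ]
          push_cast
          rw [mul_pow, mul_pow, ← pow_mul, ← pow_mul, pow_add]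
          ring
        rw [hterm]
        apply Dvd.dvd.mul_right
        apply pow_dvd_pow
        have hsplit : s * m = s * (m - j) + s * j := by
          rw [← Nat.mul_add, Nat.sub_add_cancel hj.le]
        rw [hsplit]
        exact Nat.add_le_add_right (Nat.mul_le_mul hsL.le (Nat.le_refl (m - j))) _
    obtain ⟨N', hN'⟩ := stepB
    refine ⟨N', t0 ^ m, fun hd => ht0 (hppZ.dvd_of_dvd_pow hd), ?_⟩
    have hpsm : ((p : ℚ)) ^ (s * m) ≠ 0 := pow_ne_zero _ hpQ
    apply mul_left_cancel₀ hpsm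
    have lhs : (p : ℚ) ^ (s * m) *
        ((Dlcm Δ : ℚ) ^ m * (∑ j ∈ Finset.Ico m (Δ + 1), U.coeff j * (t : ℚ) ^ (j - m)) * ((t0 : ℚ)) ^ m)
        = (t : ℚ) ^ m *
          ((Dlcm Δ : ℚ) ^ m * ∑ j ∈ Finset.Ico m (Δ + 1), U.coeff j * (t : ℚ) ^ (j - m)) := by
      rw [htQ, mul_pow, ← pow_mul]
      ring
    push_cast
    rw [lhs, stepA]
    exact_mod_cast congrArg (Int.cast : ℤ → ℚ) hN'

end Aux


section
open Polynomial Aux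

/-- The product of a `Δ`-normal rational function with an integer-valued polynomial of
degree at most `Δ` is again `Δ`-normal, with the same maximal pole order `M`. -/
theorem deltaNormal_mul_integer_valued
    (Δ M : ℕ) (R : ℚ → ℚ) (hR : IsDeltaNormal Δ M R)
    (T : Polynomial ℚ) (hT : ∀ n : ℤ, ∃ z : ℤ, T.eval (n : ℚ) = z)
    (hdeg : T.natDegree ≤ Δ) :
    IsDeltaNormal Δ M (fun x => R x * T.eval x) := by
  obtain ⟨𝒜, coef, P, hcoef, hP, hiden⟩ := hR
  set U : ℕ → Polynomial ℚ := fun α => T.comp (X - C (α : ℚ)) with hU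
  set cc : ℕ → ℕ → ℚ := fun α j => (U α).coeff j with hcc
  set coef' : ℕ → ℕ → ℚ :=
    fun m' α => ∑ m ∈ Finset.Icc m' M, coef m α * cc α (m - m') with hcoef'
  set Q : ℕ → ℕ → Polynomial ℚ := fun α m =>
    ∑ j ∈ Finset.Ico m (Δ + 1), Polynomial.C (cc α j) * (X + C (α : ℚ)) ^ (j - m) with hQ
  set P' : Polynomial ℚ :=
    (∑ α ∈ 𝒜, ∑ m ∈ Finset.Icc 1 M, Polynomial.C (coef m α) * Q α m) + P * T with hP'
  have hUdeg : ∀ α, (U α).natDegree ≤ Δ := by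
    intro α
    rw [hU]
    simp only
    rw [natDegree_comp, natDegree_X_sub_C, mul_one]
    exact hdeg
  have hUint : ∀ α : ℕ, ∀ n : ℤ, IZ ((U α).eval (n : ℚ)) := by
    intro α n
    rw [hU]
    simp only [eval_comp, eval_sub, eval_X, eval_C]
    have : (n : ℚ) - (α : ℚ) = ((n - (α : ℤ) : ℤ) : ℚ) := by push_cast; ring
    rw [this]
    exact hT _
  have hUeval : ∀ (α : ℕ) (x : ℚ), (U α).eval (x + (α : ℚ)) = T.eval x := by
    intro α x
    rw [hU]
    simp only [eval_comp, eval_sub, eval_X, eval_C, add_sub_cancel_right]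
  have hQeval : ∀ (α m : ℕ) (y : ℚ),
      (Q α m).eval y = ∑ j ∈ Finset.Ico m (Δ + 1), cc α j * (y + (α : ℚ)) ^ (j - m) := by
    intro α m y
    rw [hQ]
    simp [eval_finset_sum]
  have hP'eval : ∀ y : ℚ, P'.eval y
      = (∑ α ∈ 𝒜, ∑ m ∈ Finset.Icc 1 M, coef m α * (Q α m).eval y) + P.eval y * T.eval y := by
    intro y
    rw [hP']
    simp [eval_finset_sum]
  refine ⟨𝒜, coef', P', ?_, ?_, ?_⟩
  · -- integrality of new coefficients
    intro m' hm' α hα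
    rw [Finset.mem_Icc] at hm'
    rw [hcoef']
    simp only
    rw [Finset.mul_sum]
    apply IZ_sum
    intro m hm
    rw [Finset.mem_Icc] at hm
    have hsplit : (Dlcm Δ : ℚ) ^ (M - m') = (Dlcm Δ : ℚ) ^ (M - m) * (Dlcm Δ : ℚ) ^ (m - m') := by
      rw [← pow_add]
      congr 1
      omega
    rw [hsplit, show (Dlcm Δ : ℚ) ^ (M - m) * (Dlcm Δ : ℚ) ^ (m - m') * (coef m α * cc α (m - m'))
        = ((Dlcm Δ : ℚ) ^ (M - m) * coef m α) * ((Dlcm Δ : ℚ) ^ (m - m') * cc α (m - m'))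
      from by ring]
    exact IZ_mul (hcoef m (Finset.mem_Icc.2 ⟨by omega, hm.2⟩) α hα)
      (coeff_int Δ (U α) (hUdeg α) (hUint α) (m - m'))
  · -- integrality of new polynomial part
    intro n
    rw [hP'eval]
    rw [mul_add, Finset.mul_sum]
    apply IZ_add
    · apply IZ_sum
      intro α _
      rw [Finset.mul_sum]
      apply IZ_sum
      intro m hm
      rw [Finset.mem_Icc] at hm
      have hsplit : (Dlcm Δ : ℚ) ^ M = (Dlcm Δ : ℚ) ^ (M - m) * (Dlcm Δ : ℚ) ^ m := by
        rw [← pow_add]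
        congr 1
        omega
      rw [hsplit, show (Dlcm Δ : ℚ) ^ (M - m) * (Dlcm Δ : ℚ) ^ m * (coef m α * (Q α m).eval (n : ℚ))
          = ((Dlcm Δ : ℚ) ^ (M - m) * coef m α) * ((Dlcm Δ : ℚ) ^ m * (Q α m).eval (n : ℚ))
        from by ring]
      refine IZ_mul (hcoef m (Finset.mem_Icc.2 ⟨hm.1, hm.2⟩) α ‹α ∈ 𝒜›) ?_
      rw [hQeval]
      have hcastt : (n : ℚ) + (α : ℚ) = ((n + (α : ℤ) : ℤ) : ℚ) := by push_cast; ring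
      rw [show (∑ j ∈ Finset.Ico m (Δ + 1), cc α j * ((n : ℚ) + (α : ℚ)) ^ (j - m))
          = ∑ j ∈ Finset.Ico m (Δ + 1), (U α).coeff j * (((n + (α : ℤ) : ℤ) : ℚ)) ^ (j - m)
        from Finset.sum_congr rfl fun j _ => by rw [hcastt, hcc]]
      exact remainder_int Δ (U α) (hUdeg α) (hUint α) m (n + (α : ℤ))
    · rw [show (Dlcm Δ : ℚ) ^ M * (P.eval (n : ℚ) * T.eval (n : ℚ))
          = ((Dlcm Δ : ℚ) ^ M * P.eval (n : ℚ)) * T.eval (n : ℚ) from by ring]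
      exact IZ_mul (hP n) (hT n)
  · -- the identity
    intro x hx
    simp only
    have key : ∀ α ∈ 𝒜,
        (∑ m ∈ Finset.Icc 1 M, coef m α / (x + (α : ℚ)) ^ m) * T.eval x
        = (∑ m' ∈ Finset.Icc 1 M, coef' m' α / (x + (α : ℚ)) ^ m')
          + ∑ m ∈ Finset.Icc 1 M, coef m α * (Q α m).eval x := by
      intro α hαmem
      set y : ℚ := x + (α : ℚ) with hy
      have hy0 : y ≠ 0 := hx α hαmem
      have hTx : T.eval x = ∑ j ∈ Finset.range (Δ + 1), cc α j * y ^ j := by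
        rw [hy, ← hUeval α x]
        exact Polynomial.eval_eq_sum_range' (lt_of_le_of_lt (hUdeg α) (Nat.lt_succ_self Δ)) _
      have hper : ∀ m ∈ Finset.Icc 1 M, coef m α / y ^ m * T.eval x
          = (∑ j ∈ Finset.range m, coef m α * cc α j / y ^ (m - j))
            + coef m α * (Q α m).eval x := by
        intro m hm
        have hA : coef m α / y ^ m * T.eval x
            = ∑ j ∈ Finset.range (Δ + 1), coef m α * cc α j * y ^ j / y ^ m := by
          rw [hTx, Finset.mul_sum]
          exact Finset.sum_congr rfl fun j _ => by ring
        have hsplitsum : ∑ j ∈ Finset.range (Δ + 1), coef m α * cc α j * y ^ j / y ^ m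
            = (∑ j ∈ (Finset.range (Δ + 1)).filter (· < m),
                coef m α * cc α j * y ^ j / y ^ m)
              + ∑ j ∈ (Finset.range (Δ + 1)).filter (¬ · < m),
                coef m α * cc α j * y ^ j / y ^ m :=
          (Finset.sum_filter_add_sum_filter_not _ _ _).symm
        have hfilter2 : (Finset.range (Δ + 1)).filter (¬ · < m) = Finset.Ico m (Δ + 1) := by
          ext j
          simp only [Finset.mem_filter, Finset.mem_range, Finset.mem_Ico]
          omega
        have hC : ∑ j ∈ (Finset.range (Δ + 1)).filter (· < m),
              coef m α * cc α j * y ^ j / y ^ m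
            = ∑ j ∈ Finset.range m, coef m α * cc α j * y ^ j / y ^ m := by
          apply Finset.sum_subset
          · intro j hj
            simp only [Finset.mem_filter, Finset.mem_range] at hj ⊢
            exact hj.2
          · intro j hj hj2
            simp only [Finset.mem_filter, Finset.mem_range] at hj hj2
            have hjΔ : ¬ j < Δ + 1 := fun hc => hj2 ⟨hc, hj⟩
            have : cc α j = 0 := by
              rw [hcc]
              exact Polynomial.coeff_eq_zero_of_natDegree_lt
                (lt_of_le_of_lt (hUdeg α) (by omega))
            rw [this]
            ring
        have hD : ∀ j ∈ Finset.range m, coef m α * cc α j * y ^ j / y ^ m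
            = coef m α * cc α j / y ^ (m - j) := by
          intro j hj
          rw [Finset.mem_range] at hj
          rw [show y ^ m = y ^ (m - j) * y ^ j from by rw [← pow_add]; congr 1; omega]
          exact mul_div_mul_right _ _ (pow_ne_zero j hy0)
        have hE : ∀ j ∈ Finset.Ico m (Δ + 1), coef m α * cc α j * y ^ j / y ^ m
            = coef m α * (cc α j * y ^ (j - m)) := by
          intro j hj
          rw [Finset.mem_Ico] at hj
          rw [div_eq_iff (pow_ne_zero m hy0)]
          rw [show y ^ j = y ^ (j - m) * y ^ m from by rw [← pow_add, Nat.sub_add_cancel hj.1]]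
          ring
        rw [hA, hsplitsum, hfilter2, hC, Finset.sum_congr rfl hD, Finset.sum_congr rfl hE,
          hQeval, ← Finset.mul_sum]
      rw [Finset.sum_mul, Finset.sum_congr rfl hper, Finset.sum_add_distrib]
      congr 1
      -- reindexing the double sum
      have hRHS : ∀ m' ∈ Finset.Icc 1 M, coef' m' α / y ^ m'
          = ∑ m ∈ Finset.Icc m' M, coef m α * cc α (m - m') / y ^ m' := by
        intro m' _
        rw [hcoef']
        simp only
        rw [Finset.sum_div]
      rw [Finset.sum_congr rfl hRHS, Finset.sum_sigma', Finset.sum_sigma']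
      refine Finset.sum_nbij' (fun q => ⟨q.1 - q.2, q.1⟩) (fun q => ⟨q.2, q.2 - q.1⟩)
        ?_ ?_ ?_ ?_ ?_
      · rintro ⟨m, j⟩ hq
        simp only [Finset.mem_sigma, Finset.mem_Icc, Finset.mem_range] at hq ⊢
        omega
      · rintro ⟨m', m⟩ hq
        simp only [Finset.mem_sigma, Finset.mem_Icc, Finset.mem_range] at hq ⊢
        omega
      · rintro ⟨m, j⟩ hq
        simp only [Finset.mem_sigma, Finset.mem_Icc, Finset.mem_range] at hq
        exact congrArg (Sigma.mk m) (by omega : m - (m - j) = j)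
      · rintro ⟨m', m⟩ hq
        simp only [Finset.mem_sigma, Finset.mem_Icc, Finset.mem_range] at hq
        exact congrArg (fun w => (⟨w, m⟩ : (_ : ℕ) × ℕ)) (by omega : m - (m - m') = m')
      · rintro ⟨m, j⟩ hq
        simp only [Finset.mem_sigma, Finset.mem_Icc, Finset.mem_range] at hq
        simp only
        rw [show m - (m - j) = j from by omega]
    rw [hiden x hx, add_mul, Finset.sum_mul, Finset.sum_congr rfl key,
      Finset.sum_add_distrib, hP'eval x]
    ring

end
end

section
/- For integers c ≥ 1 and 0 ≤ k ≤ c−1, and for variables x, y: (x−y+1)(x−y+2)⋯(x−y+c−1) = Σ_{k=0}^{c−1} (−1)^k C(c−1, k) · (x+k+1)(x+k+2)⋯(x+c−1) · y(y+1)⋯(y+k−1), as an identity of polynomials in two variables over ℚ. -/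
open Finset Polynomial

private lemma descPoch_eval_eq_prod (n : ℕ) (t : ℚ) :
    (descPochhammer ℚ n).eval t = ∏ j ∈ Finset.range n, (t - (j : ℚ)) := by
  induction n with
  | zero => simp
  | succ n ih => rw [descPochhammer_succ_eval, ih, Finset.prod_range_succ]

private lemma smeval_descPoch (k : ℕ) (r : ℚ) :
    (descPochhammer ℤ k).smeval r = (descPochhammer ℚ k).eval r := by
  rw [← Polynomial.aeval_eq_smeval, Polynomial.aeval_def, ← Polynomial.eval_map,
    descPochhammer_map]

private lemma vandQ (k : ℕ) (r s : ℚ) :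
    (descPochhammer ℚ k).eval (r + s) =
      ∑ ij ∈ Finset.HasAntidiagonal.antidiagonal k, (k.choose ij.1 : ℚ) *
        ((descPochhammer ℚ ij.1).eval r * (descPochhammer ℚ ij.2).eval s) := by
  have h := Ring.descPochhammer_smeval_add (R := ℚ) k (Commute.all r s)
  simpa [smeval_descPoch] using h

/-- `∏_{j<n} (u + (k+n) − j) = ∏_{i=k+1}^{k+n} (u+i)`. -/
private lemma prod_shift (n k : ℕ) (u : ℚ) :
    ∏ j ∈ Finset.range n, (u + ((k + n : ℕ) : ℚ) - (j : ℚ)) =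
      ∏ i ∈ Finset.Icc (k + 1) (k + n), (u + (i : ℚ)) := by
  induction n with
  | zero => simp
  | succ n ih =>
    rw [Finset.prod_range_succ']
    have h1 : ∀ j ∈ Finset.range n,
        (u + ((k + (n+1) : ℕ) : ℚ) - ((j + 1 : ℕ) : ℚ)) =
          (u + ((k + n : ℕ) : ℚ) - (j : ℚ)) := by
      intro j _; push_cast; ring
    rw [Finset.prod_congr rfl h1, ih, show k + (n+1) = (k+n)+1 by omega,
      Finset.prod_Icc_succ_top (by omega : k + 1 ≤ k + n + 1)]
    push_cast; ring

/-- For `c ≥ 1`,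
`(x−y+1)⋯(x−y+c−1) = Σ_{k=0}^{c−1} (−1)^k C(c−1,k) (x+k+1)⋯(x+c−1) · y(y+1)⋯(y+k−1)`
as polynomials in `x, y` over `ℚ`. -/
theorem vasiliev_identity_c (c : ℕ) (hc : 1 ≤ c) :
    ∀ x y : ℚ,
      (∏ i ∈ Finset.Icc 1 (c - 1), (x - y + (i : ℚ))) =
        ∑ k ∈ Finset.range c, (-1 : ℚ) ^ k * ((c - 1).choose k : ℚ) *
          (∏ i ∈ Finset.Icc (k + 1) (c - 1), (x + (i : ℚ))) *
          (∏ i ∈ Finset.range k, (y + (i : ℚ))) := by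
  obtain ⟨n, rfl⟩ : ∃ n, c = n + 1 := ⟨c - 1, by omega⟩
  intro x y
  simp only [Nat.add_sub_cancel]
  have lhs_eq : (∏ i ∈ Finset.Icc 1 n, (x - y + (i : ℚ))) =
      (descPochhammer ℚ n).eval (-y + (x + (n : ℚ))) := by
    rw [descPoch_eval_eq_prod]
    have := prod_shift n 0 (x - y)
    simp only [Nat.zero_add, zero_add] at this
    rw [← this]
    exact Finset.prod_congr rfl fun j _ => by ring
  rw [lhs_eq, vandQ, Finset.Nat.sum_antidiagonal_eq_sum_range_succ_mk]
  refine Finset.sum_congr rfl fun k hk => ?_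
  have hkn : k ≤ n := by simpa using Nat.lt_succ_iff.mp (Finset.mem_range.mp hk)
  have hy : (descPochhammer ℚ k).eval (-y) = (-1 : ℚ) ^ k * ∏ j ∈ Finset.range k, (y + (j : ℚ)) := by
    rw [descPoch_eval_eq_prod]
    have : ∀ j ∈ Finset.range k, (-y - (j : ℚ)) = (-1) * (y + (j : ℚ)) := by
      intro j _; ring
    rw [Finset.prod_congr rfl this, Finset.prod_mul_distrib, Finset.prod_const,
      Finset.card_range]
  have hx : (descPochhammer ℚ (n - k)).eval (x + (n : ℚ)) =
      ∏ i ∈ Finset.Icc (k + 1) n, (x + (i : ℚ)) := by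
    rw [descPoch_eval_eq_prod]
    have h := prod_shift (n - k) k x
    rw [show k + (n - k) = n from by omega] at h
    exact h
  rw [hy, hx]
  ring
end

section
/- For m > 1 and an integer-valued polynomial T of degree ≤ Δ, with α ∈ ℤ, writing T(x) = T(−α) + (x+α)Q(x): A/(x+α)^m · T(x) = A·T(−α)/(x+α)^m + A·Q(x)/(x+α)^{m−1}, and if D_Δ^{M−m} A ∈ ℤ then D_Δ^{M−m}(A·T(−α)) ∈ ℤ and D_Δ^{M−(m−1)}·(A/D_Δ) ∈ ℤ with D_Δ·Q integer-valued. -/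
open Finset fwdDiff Polynomial

lemma fd_cast (g : ℤ → ℤ) (k : ℕ) (y : ℤ) :
    (fwdDiff (1:ℤ))^[k] (fun n : ℤ => ((g n : ℚ))) y = (((fwdDiff (1:ℤ))^[k] g y : ℤ) : ℚ) := by
  induction k generalizing y with
  | zero => simp
  | succ k IH =>
    simp only [Function.iterate_succ_apply', fwdDiff, IH]
    push_cast
    ring

lemma fd_poly : ∀ (d : ℕ) (P : Polynomial ℚ), P.natDegree ≤ d →
    (fwdDiff (1:ℤ))^[d+1] (fun n : ℤ => P.eval (n : ℚ)) = 0 := by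
  intro d
  induction d with
  | zero =>
    intro P hP
    obtain ⟨c, rfl⟩ : ∃ c, P = C c := ⟨P.coeff 0, (Polynomial.eq_C_of_natDegree_le_zero hP)⟩
    funext y
    simp [fwdDiff]
  | succ d IH =>
    intro P hP
    have key : fwdDiff (1:ℤ) (fun n : ℤ => P.eval (n : ℚ))
        = fun n : ℤ => (P.comp (X + C 1) - P).eval (n : ℚ) := by
      funext n
      simp only [fwdDiff, Polynomial.eval_sub, Polynomial.eval_comp, Polynomial.eval_add,
        Polynomial.eval_X, Polynomial.eval_C]
      push_cast
      ring
    have hdeg : (P.comp (X + C 1) - P).natDegree ≤ d := by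
      by_cases h0 : P.natDegree = 0
      · obtain ⟨c, rfl⟩ : ∃ c, P = C c := ⟨P.coeff 0, (Polynomial.eq_C_of_natDegree_le_zero h0.le)⟩
        simp
      · have hP0 : P ≠ 0 := fun h => h0 (by simp [h])
        have hnc : (P.comp (X + C 1)).natDegree = P.natDegree := by
          rw [Polynomial.natDegree_comp, Polynomial.natDegree_X_add_C, mul_one]
        have hlc : (P.comp (X + C 1)).leadingCoeff = P.leadingCoeff := by
          rw [Polynomial.leadingCoeff_comp (by rw [Polynomial.natDegree_X_add_C]; exact one_ne_zero)]
          rw [Polynomial.leadingCoeff_X_add_C, one_pow, mul_one]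
        have hne : P.comp (X + C 1) ≠ 0 := fun h => hP0 (Polynomial.leadingCoeff_eq_zero.mp
          (by rw [← hlc, h, Polynomial.leadingCoeff_zero]))
        have hdeq : (P.comp (X + C 1)).degree = P.degree := by
          rw [Polynomial.degree_eq_natDegree hne, Polynomial.degree_eq_natDegree hP0, hnc]
        have hlt : (P.comp (X + C 1) - P).degree < P.degree := by
          rw [← hdeq]
          exact Polynomial.degree_sub_lt hdeq hne hlc
        by_cases hz : P.comp (X + C 1) - P = 0
        · rw [hz]; simp
        · have := Polynomial.natDegree_lt_natDegree hz hlt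
          omega
    rw [Function.iterate_succ_apply, key]
    exact IH _ hdeg

lemma fd_iter_zero_fun : ∀ j : ℕ, (fwdDiff (1:ℤ))^[j] (0 : ℤ → ℤ) = 0 := by
  intro j
  induction j with
  | zero => rfl
  | succ j IH =>
    rw [Function.iterate_succ_apply', IH]
    funext y
    simp [fwdDiff]

lemma fd_zero_of_ge (g : ℤ → ℤ) (d : ℕ) (hg : (fwdDiff (1:ℤ))^[d+1] g = 0)
    (k : ℕ) (hk : d + 1 ≤ k) : (fwdDiff (1:ℤ))^[k] g = 0 := by
  obtain ⟨j, rfl⟩ := Nat.exists_eq_add_of_le hk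
  rw [Nat.add_comm, Function.iterate_add_apply, hg, fd_iter_zero_fun]

lemma key_dvd (D : ℕ) (Δ : ℕ) (hdvd : ∀ k, 1 ≤ k → k ≤ Δ → k ∣ D)
    (g : ℤ → ℤ) (hg : (fwdDiff (1:ℤ))^[Δ+1] g = 0) (a b : ℤ) :
    (a - b) ∣ (D : ℤ) * (g a - g b) := by
  have main : ∀ (s : ℕ) (b : ℤ), (s : ℤ) ∣ (D:ℤ) * (g (b + s) - g b) := by
    intro s b
    have hnewton := shift_eq_sum_fwdDiff_iter (1:ℤ) g s b
    simp only [smul_eq_mul, nsmul_eq_mul, mul_one] at hnewton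
    rw [Finset.sum_range_succ'] at hnewton
    simp only [Nat.choose_zero_right, Nat.cast_one, one_mul, Function.iterate_zero, id_eq]
      at hnewton
    have hsum : g (b + s) - g b
        = ∑ k ∈ Finset.range s, (s.choose (k+1) : ℤ) * ((fwdDiff (1:ℤ))^[k+1] g b) := by
      rw [hnewton]; ring
    rw [mul_comm, hsum, Finset.sum_mul]
    refine Finset.dvd_sum ?_
    intro k hk
    have hs1 : 1 ≤ s := by
      have := Finset.mem_range.mp hk; omega
    by_cases hkΔ : k + 1 ≤ Δ
    · obtain ⟨e, he⟩ := hdvd (k+1) (by omega) hkΔ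
      have hid := Nat.add_one_mul_choose_eq (s-1) k
      rw [Nat.sub_add_cancel hs1] at hid
      have hid' : (s:ℤ) * ((s-1).choose k : ℤ) = (s.choose (k+1) : ℤ) * (k+1) := by
        exact_mod_cast hid
      have he' : (D:ℤ) = (k+1) * e := by exact_mod_cast he
      refine ⟨(e:ℤ) * ((s-1).choose k : ℤ) * ((fwdDiff (1:ℤ))^[k+1] g b), ?_⟩
      linear_combination ((s.choose (k+1) : ℤ) * ((fwdDiff (1:ℤ))^[k+1] g b)) * he'
        - (e:ℤ) * ((fwdDiff (1:ℤ))^[k+1] g b) * hid'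
    · rw [fd_zero_of_ge g Δ hg (k+1) (by omega)]
      simp
  rcases le_total b a with h | h
  · have := main (a - b).toNat b
    rw [Int.toNat_of_nonneg (sub_nonneg.mpr h)] at this
    simpa using this
  · have h2 := main (b - a).toNat a
    rw [Int.toNat_of_nonneg (sub_nonneg.mpr h)] at h2
    simp only [add_sub_cancel] at h2
    rw [show a - b = -(b - a) by ring, show (D:ℤ)*(g a - g b) = -((D:ℤ)*(g b - g a)) by ring]
    exact neg_dvd.mpr (dvd_neg.mpr (by simpa using h2))



/-- Inductive step of the `Δ`-normality lemma: with `T(x) = T(−α) + (x+α)Q(x)`,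
`A/(x+α)^m · T(x) = A·T(−α)/(x+α)^m + A·Q(x)/(x+α)^{m−1}`, and if
`D_Δ^{M−m} A ∈ ℤ` then `D_Δ^{M−m}(A·T(−α)) ∈ ℤ`, `D_Δ^{M−(m−1)}·(A/D_Δ) ∈ ℤ`,
and `D_Δ·Q` is integer-valued. -/
theorem deltaNormal_inductive_step
    (Δ : ℕ) (hΔ : 1 ≤ Δ) (A : ℚ) (α : ℤ) (m M : ℕ) (hm : 1 < m) (hmM : m ≤ M)
    (T Q : Polynomial ℚ)
    (hT : ∀ n : ℤ, ∃ z : ℤ, T.eval (n : ℚ) = z) (hdeg : T.natDegree ≤ Δ)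
    (hQ : T = Polynomial.C (T.eval ((-α : ℤ) : ℚ)) +
      (Polynomial.X + Polynomial.C ((α : ℚ))) * Q)
    (hA : ∃ z : ℤ, ((Dlcm Δ : ℚ) ^ (M - m)) * A = z) :
    (∀ x : ℚ, x + (α : ℚ) ≠ 0 →
      A / (x + (α : ℚ)) ^ m * T.eval x =
        A * T.eval ((-α : ℤ) : ℚ) / (x + (α : ℚ)) ^ m +
          A * Q.eval x / (x + (α : ℚ)) ^ (m - 1)) ∧
    (∃ z : ℤ, ((Dlcm Δ : ℚ) ^ (M - m)) * (A * T.eval ((-α : ℤ) : ℚ)) = z) ∧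
    (∃ z : ℤ, ((Dlcm Δ : ℚ) ^ (M - (m - 1))) * (A / (Dlcm Δ : ℚ)) = z) ∧
    (∀ n : ℤ, ∃ z : ℤ, (Dlcm Δ : ℚ) * Q.eval (n : ℚ) = z) := by
  have hDne : Dlcm Δ ≠ 0 := by
    intro h
    have h0 := Finset.lcm_eq_zero_iff.mp h
    simp only [Set.mem_image, Finset.mem_coe, Finset.mem_Icc, id_eq] at h0
    omega
  have hD0 : (Dlcm Δ : ℚ) ≠ 0 := by exact_mod_cast hDne
  have hdvdD : ∀ k, 1 ≤ k → k ≤ Δ → k ∣ Dlcm Δ := by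
    intro k h1 h2
    exact Finset.dvd_lcm (Finset.mem_Icc.mpr ⟨h1, h2⟩) (f := id) (b := k)
  set g : ℤ → ℤ := fun n => (hT n).choose with hgdef
  have hg : ∀ n : ℤ, T.eval ((n : ℤ) : ℚ) = ((g n : ℤ) : ℚ) := fun n => (hT n).choose_spec
  have hgz : (fwdDiff (1:ℤ))^[Δ+1] g = 0 := by
    have h1 : (fwdDiff (1:ℤ))^[Δ+1] (fun n : ℤ => T.eval (n : ℚ)) = 0 := fd_poly Δ T hdeg
    have h2 : (fun n : ℤ => T.eval ((n : ℤ) : ℚ)) = fun n : ℤ => ((g n : ℤ) : ℚ) := funext hg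
    funext y
    have h3 := congrFun h1 y
    rw [h2, fd_cast] at h3
    simpa using h3
  have hTev : ∀ x : ℚ, T.eval x = T.eval ((-α : ℤ) : ℚ) + (x + α) * Q.eval x := by
    intro x
    conv_lhs => rw [hQ]
    simp
  have part4ne : ∀ n : ℤ, n ≠ -α → ∃ z : ℤ, (Dlcm Δ : ℚ) * Q.eval (n : ℚ) = z := by
    intro n hn
    obtain ⟨z, hz⟩ := key_dvd (Dlcm Δ) Δ hdvdD g hgz n (-α)
    refine ⟨z, ?_⟩
    have hxq : ((n : ℚ) + α) ≠ 0 := by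
      intro h
      apply hn
      have : ((n : ℚ)) = ((-α : ℤ) : ℚ) := by push_cast; linarith
      exact_mod_cast this
    have hz' : (Dlcm Δ : ℚ) * ((g n : ℚ) - (g (-α) : ℚ)) = ((n : ℚ) + α) * z := by
      have := congrArg (fun t : ℤ => (t : ℚ)) hz
      push_cast at this
      linarith [this]
    have e1 : ((n : ℚ) + α) * Q.eval (n : ℚ) = (g n : ℚ) - (g (-α) : ℚ) := by
      have h4 := hTev ((n : ℤ) : ℚ)
      rw [hg n, hg (-α)] at h4
      linarith [h4]
    apply mul_left_cancel₀ hxq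
    calc ((n : ℚ) + α) * ((Dlcm Δ : ℚ) * Q.eval (n : ℚ))
        = (Dlcm Δ : ℚ) * (((n : ℚ) + α) * Q.eval (n : ℚ)) := by ring
      _ = (Dlcm Δ : ℚ) * ((g n : ℚ) - (g (-α) : ℚ)) := by rw [e1]
      _ = ((n : ℚ) + α) * z := hz'
  refine ⟨?_, ?_, ?_, ?_⟩
  · intro x hx
    have hpow : (x + (α : ℚ)) ^ m = (x + (α : ℚ)) ^ (m - 1) * (x + (α : ℚ)) := by
      rw [← pow_succ]
      congr 1
      omega
    rw [hTev x, hpow]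
    field_simp
  · obtain ⟨z, hz⟩ := hA
    refine ⟨z * g (-α), ?_⟩
    rw [hg (-α)]
    push_cast
    linear_combination ((g (-α) : ℚ)) * hz
  · obtain ⟨z, hz⟩ := hA
    refine ⟨z, ?_⟩
    have hMm : M - (m - 1) = (M - m) + 1 := by omega
    rw [hMm, pow_succ]
    field_simp
    linear_combination hz
  · intro n
    by_cases hn : n = -α
    · subst hn
      set N := Q.natDegree with hN
      have hQ0 : (fwdDiff (1:ℤ))^[N+1] (fun n : ℤ => Q.eval (n : ℚ)) = 0 := fd_poly N Q le_rfl
      have hsum := fwdDiff_iter_eq_sum_shift (1:ℤ) (fun n : ℤ => Q.eval (n : ℚ)) (N+1) (-α)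
      rw [hQ0] at hsum
      simp only [Pi.zero_apply, smul_eq_mul, nsmul_eq_mul, mul_one, zsmul_eq_mul] at hsum
      rw [Finset.sum_range_succ'] at hsum
      choose w hw using fun k : ℕ => part4ne (-α + (k+1)) (by omega)
      refine ⟨(-1)^(N+1) * (- ∑ k ∈ Finset.range (N+1),
        ((-1:ℤ)^(N+1-(k+1)) * (((N+1).choose (k+1) : ℕ) : ℤ)) * w k), ?_⟩
      have hS : (Dlcm Δ : ℚ) * (∑ k ∈ Finset.range (N+1),
            (((-1:ℤ)^(N+1-(k+1)) * (((N+1).choose (k+1) : ℕ) : ℤ) : ℤ) : ℚ)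
              * Q.eval (((-α + (k+1) : ℤ)) : ℚ))
          = ∑ k ∈ Finset.range (N+1),
            (((-1:ℤ)^(N+1-(k+1)) * (((N+1).choose (k+1) : ℕ) : ℤ) : ℤ) : ℚ) * (w k : ℚ) := by
        rw [Finset.mul_sum]
        refine Finset.sum_congr rfl fun k _ => ?_
        rw [← hw k]
        ring
      have he2 : ((-1:ℚ))^(N+1) * ((-1:ℚ))^(N+1) = 1 := by
        rw [← pow_add]
        exact Even.neg_one_pow ⟨N+1, by ring⟩
      have hpow : ((-1:ℚ))^(N*2) = 1 := by
        rw [mul_comm, pow_mul]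
        simp
      simp only [Nat.cast_zero, add_zero, Nat.choose_zero_right, Nat.cast_one, mul_one,
        Nat.sub_zero, Nat.cast_ofNat, Nat.cast_add, Nat.cast_one] at hsum hS ⊢
      push_cast at hsum hS ⊢
      linear_combination (-((-1:ℚ)^(N+1)) * (Dlcm Δ : ℚ)) * hsum
        + (-((-1:ℚ)^(N+1))) * hS
        + ((Dlcm Δ : ℚ) * Polynomial.eval (-(α:ℚ)) Q) * he2
        + (-(2:ℚ) * (Dlcm Δ : ℚ) * Polynomial.eval (-(α:ℚ)) Q) * hpow
    · exact part4ne n hn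
end
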